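/- arXiv:1505.02203 — 4 statements merged into one kernel-verified Lean document; each statement's English description precedes it below -/
import Mathlib

section
/- Grioli's theorem: For F ∈ GL⁺(n) with polar decomposition F = R·U (R ∈ SO(n), U symmetric positive definite), the minimum over Q ∈ SO(n) of the Frobenius norm ‖QᵀF − Id‖ is attained uniquely at Q = R, and the minimal value equals ‖U − Id‖ = ‖√(FᵀF) − Id‖. -/
open Matrix
open scoped Classical

/-- Matrix exponential on real `n × n` matrices. -/
noncomputable def mexp {n : ℕ} (X : Matrix (Fin n) (Fin n) ℝ) : Matrix (Fin n) (Fin n) ℝ :=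
  NormedSpace.exp X

/-- Symmetric part. -/
noncomputable def symPart {n : ℕ} (X : Matrix (Fin n) (Fin n) ℝ) : Matrix (Fin n) (Fin n) ℝ :=
  (1 / 2 : ℝ) • (X + Xᵀ)

/-- Skew-symmetric part. -/
noncomputable def skewPart {n : ℕ} (X : Matrix (Fin n) (Fin n) ℝ) : Matrix (Fin n) (Fin n) ℝ :=
  (1 / 2 : ℝ) • (X - Xᵀ)

/-- Deviatoric (trace-free) part. -/
noncomputable def devPart {n : ℕ} (X : Matrix (Fin n) (Fin n) ℝ) : Matrix (Fin n) (Fin n) ℝ :=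
  X - (X.trace / n) • (1 : Matrix (Fin n) (Fin n) ℝ)

/-- Squared Frobenius norm. -/
noncomputable def frobSq {n : ℕ} (X : Matrix (Fin n) (Fin n) ℝ) : ℝ := (Xᵀ * X).trace

/-- Frobenius norm. -/
noncomputable def frobNorm {n : ℕ} (X : Matrix (Fin n) (Fin n) ℝ) : ℝ := Real.sqrt (frobSq X)

/-- Principal matrix logarithm: the symmetric matrix `X` with `mexp X = P`, when it exists. -/
noncomputable def matLog {n : ℕ} (P : Matrix (Fin n) (Fin n) ℝ) : Matrix (Fin n) (Fin n) ℝ :=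
  if h : ∃ X : Matrix (Fin n) (Fin n) ℝ, X.IsSymm ∧ mexp X = P then h.choose else 0


lemma grioli_frobSq_eq_sum {n : ℕ} (X : Matrix (Fin n) (Fin n) ℝ) :
    frobSq X = ∑ i, ∑ j, (X j i)^2 := by
  simp [frobSq, Matrix.trace, Matrix.mul_apply, Matrix.diag, sq]

lemma grioli_frobSq_nonneg {n : ℕ} (X : Matrix (Fin n) (Fin n) ℝ) : 0 ≤ frobSq X := by
  rw [grioli_frobSq_eq_sum]; positivity

lemma grioli_frobSq_eq_zero {n : ℕ} {X : Matrix (Fin n) (Fin n) ℝ} (h : frobSq X = 0) :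
    X = 0 := by
  rw [grioli_frobSq_eq_sum] at h
  ext j i
  have h1 := (Finset.sum_eq_zero_iff_of_nonneg (fun i _ => by positivity)).mp h i
    (Finset.mem_univ i)
  have h2 := (Finset.sum_eq_zero_iff_of_nonneg (fun j _ => by positivity)).mp h1 j
    (Finset.mem_univ j)
  simpa using pow_eq_zero_iff (n := 2) (by norm_num) |>.mp h2

lemma grioli_key {n : ℕ} {U S W : Matrix (Fin n) (Fin n) ℝ} (hS : Sᵀ = S) (hSS : S * S = U)
    (hW : Wᵀ * W = 1) : frobSq (W * S - S) = 2 * (U.trace - (W * U).trace) := by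
  have e1 : (W * S - S)ᵀ * (W * S - S)
      = S * (Wᵀ * W) * S - S * Wᵀ * S - S * W * S + S * S := by
    rw [transpose_sub, transpose_mul, hS]; noncomm_ring
  have e2 : (S * Wᵀ * S).trace = (S * W * S).trace := by
    rw [← Matrix.trace_transpose (S * Wᵀ * S)]
    congr 1
    rw [transpose_mul, transpose_mul, transpose_transpose, hS]
    noncomm_ring
  have e3 : (S * W * S).trace = (W * U).trace := by
    rw [Matrix.trace_mul_comm (S * W) S, ← Matrix.mul_assoc, hSS, Matrix.trace_mul_comm]
  rw [frobSq, e1, hW, Matrix.mul_one, hSS]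
  rw [trace_add, trace_sub, trace_sub, e2, e3]
  ring

lemma grioli_expand1 {n : ℕ} (A : Matrix (Fin n) (Fin n) ℝ) :
    frobSq (A - 1) = (Aᵀ * A).trace - 2 * A.trace + n := by
  have e1 : (A - 1)ᵀ * (A - 1) = Aᵀ * A - Aᵀ - A + 1 := by
    rw [transpose_sub, transpose_one]; noncomm_ring
  rw [frobSq, e1, trace_add, trace_sub, trace_sub, Matrix.trace_transpose, trace_one]
  simp; ring

/-- Grioli's theorem. -/
theorem grioli {n : ℕ} {F R U : Matrix (Fin n) (Fin n) ℝ}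
    (hR : Rᵀ * R = 1) (hRdet : R.det = 1) (hU : U.PosDef) (hU2 : U * U = Fᵀ * F)
    (hF : F = R * U) :
    (∀ Q : Matrix (Fin n) (Fin n) ℝ, Qᵀ * Q = 1 → Q.det = 1 →
      frobNorm (U - 1) ≤ frobNorm (Qᵀ * F - 1)) ∧
    frobNorm (Rᵀ * F - 1) = frobNorm (U - 1) ∧
    (∀ Q : Matrix (Fin n) (Fin n) ℝ, Qᵀ * Q = 1 → Q.det = 1 →
      frobNorm (Qᵀ * F - 1) = frobNorm (U - 1) → Q = R) := by
  have hUsym : Uᵀ = U := by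
    have h : U.IsSymm := by simpa using hU.posSemidef.1
    exact h
  set S := (open scoped MatrixOrder in CFC.sqrt U) with hSdef
  have hS : Sᵀ = S := by
    open scoped MatrixOrder in
    have h := (CFC.sqrt_nonneg U).isSelfAdjoint.star_eq
    rw [Matrix.star_eq_conjTranspose, conjTranspose_eq_transpose_of_trivial] at h
    exact h
  have hSS : S * S = U := by
    open scoped MatrixOrder in
    exact CFC.sqrt_mul_sqrt_self U hU.posSemidef.nonneg
  have hSdetU : IsUnit S.det := by
    have h1 : S.det * S.det = U.det := by rw [← det_mul, hSS]
    have := hU.det_pos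
    refine isUnit_iff_ne_zero.mpr fun h => ?_
    rw [h, mul_zero] at h1; linarith
  have hRF : Rᵀ * F = U := by rw [hF, ← Matrix.mul_assoc, hR, Matrix.one_mul]
  -- the master identity
  have master : ∀ Q : Matrix (Fin n) (Fin n) ℝ, Qᵀ * Q = 1 →
      frobSq (Qᵀ * F - 1) = frobSq (U - 1) + frobSq ((Qᵀ * R) * S - S) := by
    intro Q hQ
    have hQQ : Q * Qᵀ = 1 := mul_eq_one_comm.mp hQ
    have hW : (Qᵀ * R)ᵀ * (Qᵀ * R) = 1 := by
      rw [transpose_mul, transpose_transpose, Matrix.mul_assoc,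
        ← Matrix.mul_assoc Q Qᵀ R, hQQ, Matrix.one_mul, hR]
    have hFQF : (Qᵀ * F)ᵀ * (Qᵀ * F) = U * U := by
      rw [transpose_mul, transpose_transpose, Matrix.mul_assoc,
        ← Matrix.mul_assoc Q Qᵀ F, hQQ, Matrix.one_mul, hU2]
    have hUU : Uᵀ * U = U * U := by rw [hUsym]
    have htr : (Qᵀ * F).trace = ((Qᵀ * R) * U).trace := by
      rw [hF, Matrix.mul_assoc, ← Matrix.mul_assoc Qᵀ R U]
    rw [grioli_expand1, grioli_expand1, grioli_key hS hSS hW, hFQF, hUU, htr]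
    ring
  refine ⟨?_, ?_, ?_⟩
  · intro Q hQ _
    have h := master Q hQ
    have hle : frobSq (U - 1) ≤ frobSq (Qᵀ * F - 1) := by
      have := grioli_frobSq_nonneg ((Qᵀ * R) * S - S)
      linarith
    exact Real.sqrt_le_sqrt hle
  · rw [hRF]
  · intro Q hQ _ heq
    have hQQ : Q * Qᵀ = 1 := mul_eq_one_comm.mp hQ
    have hsq : frobSq (Qᵀ * F - 1) = frobSq (U - 1) := by
      have h1 := congrArg (fun x => x ^ 2) heq
      simpa [frobNorm, Real.sq_sqrt, grioli_frobSq_nonneg] using h1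
    have h0 : frobSq ((Qᵀ * R) * S - S) = 0 := by
      have := master Q hQ; linarith
    have hWS : (Qᵀ * R) * S = S := by
      have := grioli_frobSq_eq_zero h0
      have := sub_eq_zero.mp this
      exact this
    have hW1 : Qᵀ * R = 1 := by
      have h1 : (Qᵀ * R) * S * S⁻¹ = S * S⁻¹ := by rw [hWS]
      rwa [Matrix.mul_assoc, Matrix.mul_nonsing_inv S hSdetU, Matrix.mul_one] at h1
    calc Q = Q * (Qᵀ * R) := by rw [hW1, Matrix.mul_one]
    _ = (Q * Qᵀ) * R := by rw [Matrix.mul_assoc]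
    _ = R := by rw [hQQ, Matrix.one_mul]
end

section
/- The minimization in Grioli's theorem is equivalent to the maximization of the trace: for F ∈ GL⁺(n) with polar decomposition F = R·U, the maximum over Q ∈ SO(n) of tr(QᵀF) equals tr(U). -/
open Matrix
open scoped Classical

lemma trace_transpose_mul_eq {n : ℕ} (A B : Matrix (Fin n) (Fin n) ℝ) :
    (Aᵀ * B).trace = ∑ p : Fin n × Fin n, A p.1 p.2 * B p.1 p.2 := by
  rw [Fintype.sum_prod_type, Finset.sum_comm]
  simp [Matrix.trace, Matrix.diag, Matrix.mul_apply]

open scoped MatrixOrder in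
lemma key {n : ℕ} {N U : Matrix (Fin n) (Fin n) ℝ} (hN : Nᵀ * N = 1) (hU : U.PosDef) :
    (N * U).trace ≤ U.trace := by
  set S := CFC.sqrt U with hSdef
  have hSsym : Sᵀ = S := by
    have : S.IsHermitian := (CFC.sqrt_nonneg U).posSemidef.isHermitian
    simpa [Matrix.IsHermitian, Matrix.conjTranspose_eq_transpose_of_trivial] using this
  have hSS : S * S = U := CFC.sqrt_mul_sqrt_self U hU.posSemidef.nonneg
  have h1 : (N * U).trace = ∑ p : Fin n × Fin n, S p.1 p.2 * (N * S) p.1 p.2 := by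
    rw [← hSS, ← mul_assoc, trace_mul_comm, ← hSsym, trace_transpose_mul_eq, hSsym]
  have h2 : ∑ p : Fin n × Fin n, S p.1 p.2 ^ 2 = U.trace := by
    have := trace_transpose_mul_eq S S
    rw [hSsym, hSS] at this
    rw [this]
    exact Finset.sum_congr rfl fun p _ => sq _
  have h3 : ∑ p : Fin n × Fin n, (N * S) p.1 p.2 ^ 2 = U.trace := by
    have := trace_transpose_mul_eq (N * S) (N * S)
    rw [Matrix.transpose_mul, mul_assoc, ← mul_assoc Nᵀ, hN, one_mul, hSsym, hSS] at this
    rw [this]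
    exact Finset.sum_congr rfl fun p _ => sq _
  have hcs := Finset.sum_mul_sq_le_sq_mul_sq Finset.univ
    (fun p : Fin n × Fin n => S p.1 p.2) (fun p => (N * S) p.1 p.2)
  rw [h2, h3] at hcs
  have htrU : 0 ≤ U.trace := by
    rw [← h2]; positivity
  calc (N * U).trace ≤ |(N * U).trace| := le_abs_self _
    _ = Real.sqrt ((N * U).trace ^ 2) := (Real.sqrt_sq_eq_abs _).symm
    _ ≤ Real.sqrt (U.trace * U.trace) := Real.sqrt_le_sqrt (by rw [← h1] at hcs; exact hcs)
    _ = U.trace := by rw [← sq, Real.sqrt_sq htrU]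

/-- Trace-maximization form of Grioli's theorem. -/
theorem grioli_trace_form {n : ℕ} {F R U : Matrix (Fin n) (Fin n) ℝ}
    (hR : Rᵀ * R = 1) (hRdet : R.det = 1) (hU : U.PosDef) (hU2 : U * U = Fᵀ * F)
    (hF : F = R * U) :
    (∀ Q : Matrix (Fin n) (Fin n) ℝ, Qᵀ * Q = 1 → Q.det = 1 →
      (Qᵀ * F).trace ≤ U.trace) ∧
    (Rᵀ * F).trace = U.trace := by
  constructor
  · intro Q hQ _
    have hQQt : Q * Qᵀ = 1 := mul_eq_one_comm.mp hQ
    have hN : (Qᵀ * R)ᵀ * (Qᵀ * R) = 1 := by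
      rw [Matrix.transpose_mul, Matrix.transpose_transpose, mul_assoc, ← mul_assoc Q, hQQt,
        one_mul, hR]
    have : Qᵀ * F = (Qᵀ * R) * U := by rw [hF, mul_assoc]
    rw [this]
    exact key hN hU
  · rw [hF, ← mul_assoc, hR, one_mul]
end

section
/- For F ∈ GL⁺(n), the geodesic distance of the cofactor Cof F = (det F)·F^{−T} to SO(n), with respect to the left-GL(n)-invariant, right-O(n)-invariant metric with parameters μ, μ_c, κ, equals μ‖dev_n log U‖² + (κ(n−1)²/2)[tr(log U)]², where U = √(FᵀF). In particular, ‖dev_n log √((Cof F)ᵀ(Cof F))‖² = ‖dev_n log U‖² and [tr(log √((Cof F)ᵀ(Cof F)))]² = (n−1)²[tr(log U)]². -/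
open Matrix
open scoped Classical

section Helpers

variable {n : ℕ}

local notation "M" => Matrix (Fin n) (Fin n) ℝ

lemma isSymm_iff_isHermitian (X : M) : X.IsSymm ↔ X.IsHermitian := by
  rw [Matrix.IsHermitian, Matrix.conjTranspose_eq_transpose_of_trivial, Matrix.IsSymm]

lemma aeval_units_conj (u : (Matrix (Fin n) (Fin n) ℝ)ˣ) (p : Polynomial ℝ) (A : M) :
    Polynomial.aeval ((u : M) * A * (↑u⁻¹ : M)) p
      = (u : M) * Polynomial.aeval A p * (↑u⁻¹ : M) := by
  induction p using Polynomial.induction_on' with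
  | add p q hp hq =>
      rw [map_add, map_add, hp, hq, mul_add, add_mul]
  | monomial k a =>
      rw [Polynomial.aeval_monomial, Polynomial.aeval_monomial, Units.conj_pow,
        Algebra.algebraMap_eq_smul_one]
      simp only [smul_mul_assoc, one_mul, Matrix.mul_smul]

lemma mexp_diag (d : Fin n → ℝ) :
    mexp (Matrix.diagonal d) = Matrix.diagonal (fun i => Real.exp (d i)) := by
  rw [mexp, Matrix.exp_diagonal]
  rw [Pi.exp_def, Real.exp_eq_exp_ℝ]

lemma aeval_diag (p : Polynomial ℝ) (d : Fin n → ℝ) :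
    Polynomial.aeval (Matrix.diagonal d) p
      = Matrix.diagonal (fun i => Polynomial.eval (d i) p) := by
  have h := Polynomial.aeval_algHom_apply (Matrix.diagonalAlgHom (α := ℝ) (n := Fin n) ℝ) d p
  simp only [Matrix.diagonalAlgHom_apply] at h
  rw [h]
  have h3 : (Polynomial.aeval d) p = fun i => Polynomial.eval (d i) p := by
    funext i
    have h2 := Polynomial.aeval_algHom_apply (Pi.evalAlgHom ℝ (fun _ : Fin n => ℝ) i) d p
    simpa [Polynomial.coe_aeval_eq_eval] using h2.symm
  rw [h3]

lemma spectral_real {X : Matrix (Fin n) (Fin n) ℝ} (hX : X.IsHermitian) :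
    X = (hX.eigenvectorUnitary : M) * Matrix.diagonal hX.eigenvalues
      * star (hX.eigenvectorUnitary : M) := by
  conv_lhs => rw [hX.spectral_theorem]
  rfl

lemma mexp_hermitian {X : Matrix (Fin n) (Fin n) ℝ} (hX : X.IsHermitian) :
    mexp X = (hX.eigenvectorUnitary : M)
      * Matrix.diagonal (fun i => Real.exp (hX.eigenvalues i))
      * star (hX.eigenvectorUnitary : M) := by
  set u : (Matrix (Fin n) (Fin n) ℝ)ˣ := Unitary.toUnits hX.eigenvectorUnitary with hu
  have hcoe : ((u : M)) = (hX.eigenvectorUnitary : M) := rfl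
  have hcoeinv : ((↑u⁻¹ : M)) = star (hX.eigenvectorUnitary : M) := rfl
  conv_lhs => rw [spectral_real hX]
  rw [← hcoeinv, ← hcoe, mexp, Matrix.exp_units_conj u, show NormedSpace.exp = mexp from rfl,
    mexp_diag, hcoe, hcoeinv]

lemma aeval_mexp {X : Matrix (Fin n) (Fin n) ℝ} (hX : X.IsHermitian) (p : Polynomial ℝ)
    (hp : ∀ i, Polynomial.eval (Real.exp (hX.eigenvalues i)) p = hX.eigenvalues i) :
    Polynomial.aeval (mexp X) p = X := by
  set u : (Matrix (Fin n) (Fin n) ℝ)ˣ := Unitary.toUnits hX.eigenvectorUnitary with hu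
  have hcoe : ((u : M)) = (hX.eigenvectorUnitary : M) := rfl
  have hcoeinv : ((↑u⁻¹ : M)) = star (hX.eigenvectorUnitary : M) := rfl
  rw [mexp_hermitian hX, ← hcoeinv, ← hcoe, aeval_units_conj, aeval_diag]
  simp only [hp]
  rw [hcoe, hcoeinv, ← spectral_real hX]

lemma mexp_inj {X Y : Matrix (Fin n) (Fin n) ℝ} (hX : X.IsSymm) (hY : Y.IsSymm)
    (h : mexp X = mexp Y) : X = Y := by
  have hXh := (isSymm_iff_isHermitian X).1 hX
  have hYh := (isSymm_iff_isHermitian Y).1 hY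
  set s : Finset ℝ := Finset.image hXh.eigenvalues Finset.univ
    ∪ Finset.image hYh.eigenvalues Finset.univ with hs
  set p := Lagrange.interpolate s Real.exp (id : ℝ → ℝ) with hpdef
  have hev : ∀ x ∈ s, Polynomial.eval (Real.exp x) p = x := by
    intro x hx
    rw [hpdef]
    exact Lagrange.eval_interpolate_at_node (v := Real.exp) (r := (id : ℝ → ℝ))
      Real.exp_injective.injOn hx
  have h1 : Polynomial.aeval (mexp X) p = X :=
    aeval_mexp hXh p (fun i => hev _ (Finset.mem_union_left _
      (Finset.mem_image_of_mem _ (Finset.mem_univ i))))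
  have h2 : Polynomial.aeval (mexp Y) p = Y :=
    aeval_mexp hYh p (fun i => hev _ (Finset.mem_union_right _
      (Finset.mem_image_of_mem _ (Finset.mem_univ i))))
  rw [← h1, ← h2, h]

lemma exists_symm_log {P : Matrix (Fin n) (Fin n) ℝ} (hP : P.PosDef) :
    ∃ X : Matrix (Fin n) (Fin n) ℝ, X.IsSymm ∧ mexp X = P := by
  have hH := hP.1
  set Q : M := (hH.eigenvectorUnitary : M) with hQ
  refine ⟨Q * Matrix.diagonal (fun i => Real.log (hH.eigenvalues i)) * star Q, ?_, ?_⟩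
  · rw [isSymm_iff_isHermitian, Matrix.star_eq_conjTranspose]
    exact Matrix.isHermitian_mul_mul_conjTranspose Q (Matrix.isHermitian_diagonal _)
  · set u : (Matrix (Fin n) (Fin n) ℝ)ˣ := Unitary.toUnits hH.eigenvectorUnitary with hu
    have hcoe : ((u : M)) = Q := rfl
    have hcoeinv : ((↑u⁻¹ : M)) = star Q := rfl
    rw [← hcoeinv, ← hcoe, mexp, Matrix.exp_units_conj u, show NormedSpace.exp = mexp from rfl,
      mexp_diag, hcoe, hcoeinv]
    have : (fun i => Real.exp (Real.log (hH.eigenvalues i))) = hH.eigenvalues := by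
      funext i
      exact Real.exp_log (hP.eigenvalues_pos i)
    rw [this]
    exact (spectral_real hH).symm

lemma matLog_spec {P : Matrix (Fin n) (Fin n) ℝ} (hP : P.PosDef) :
    (matLog P).IsSymm ∧ mexp (matLog P) = P := by
  rw [matLog, dif_pos (exists_symm_log hP)]
  exact (exists_symm_log hP).choose_spec

lemma det_mexp {X : Matrix (Fin n) (Fin n) ℝ} (hX : X.IsSymm) :
    (mexp X).det = Real.exp X.trace := by
  have hXh := (isSymm_iff_isHermitian X).1 hX
  have hQ1 : (hXh.eigenvectorUnitary : M) * star (hXh.eigenvectorUnitary : M) = 1 :=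
    Matrix.mem_unitaryGroup_iff.mp hXh.eigenvectorUnitary.2
  have hQ2 : star (hXh.eigenvectorUnitary : M) * (hXh.eigenvectorUnitary : M) = 1 :=
    Matrix.mem_unitaryGroup_iff'.mp hXh.eigenvectorUnitary.2
  have hdet : (mexp X).det
      = (Matrix.diagonal (fun i => Real.exp (hXh.eigenvalues i))).det := by
    rw [mexp_hermitian hXh, Matrix.det_mul, Matrix.det_mul, mul_comm, ← mul_assoc,
      ← Matrix.det_mul, hQ2]
    simp
  have htr : X.trace = ∑ i, hXh.eigenvalues i := by
    conv_lhs => rw [spectral_real hXh]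
    rw [Matrix.trace_mul_cycle, hQ2, Matrix.one_mul, Matrix.trace_diagonal]
  rw [hdet, htr, Matrix.det_diagonal, Real.exp_sum]

lemma mexp_smul_one (a : ℝ) :
    mexp (a • (1 : Matrix (Fin n) (Fin n) ℝ)) = Real.exp a • (1 : Matrix (Fin n) (Fin n) ℝ) := by
  have h1 : a • (1 : M) = Matrix.diagonal (fun _ => a) := by
    ext i j
    by_cases h : i = j <;> simp [Matrix.one_apply, h]
  have h2 : Real.exp a • (1 : M) = Matrix.diagonal (fun _ => Real.exp a) := by
    ext i j
    by_cases h : i = j <;> simp [Matrix.one_apply, h]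
  rw [h1, h2, mexp_diag]

lemma frobSq_neg (X : Matrix (Fin n) (Fin n) ℝ) : frobSq (-X) = frobSq X := by
  simp [frobSq]

end Helpers

theorem cofactor_log_strain {n : ℕ} {F U W : Matrix (Fin n) (Fin n) ℝ}
    (hFdet : 0 < F.det) (hU : U.PosDef) (hU2 : U * U = Fᵀ * F)
    (hW : W.PosDef) (hW2 : W * W = (F.det • (F⁻¹)ᵀ)ᵀ * (F.det • (F⁻¹)ᵀ)) :
    frobSq (devPart (matLog W)) = frobSq (devPart (matLog U)) ∧
    ((matLog W).trace) ^ 2 = ((n : ℝ) - 1) ^ 2 * ((matLog U).trace) ^ 2 := by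
  have hFne : F.det ≠ 0 := ne_of_gt hFdet
  have hFunit : IsUnit F.det := isUnit_iff_ne_zero.mpr hFne
  set c := F.det with hc
  set a := Real.log c with ha
  -- det U = c
  have hdetU : U.det = c := by
    have h1 : U.det ^ 2 = c ^ 2 := by
      have h2 := congrArg Matrix.det hU2
      rw [Matrix.det_mul, Matrix.det_mul, Matrix.det_transpose] at h2
      nlinarith [h2]
    nlinarith [hU.det_pos, hFdet, h1]
  -- c • U⁻¹ is positive definite
  have hUinv : (U⁻¹).PosDef := hU.inv
  have hcUinv : (c • U⁻¹).PosDef := by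
    refine ⟨?_, ?_⟩
    · rw [Matrix.IsHermitian, Matrix.conjTranspose_smul]
      rw [hUinv.1]
      norm_num
    · intro x hx
      have h3 := hUinv.2 hx
      simpa [Finsupp.mul_sum, mul_assoc, mul_left_comm] using mul_pos hFdet h3
  -- W = c • U⁻¹
  have hUU : F⁻¹ * (F⁻¹)ᵀ = U⁻¹ * U⁻¹ := by
    rw [← Matrix.mul_inv_rev U U, hU2, Matrix.mul_inv_rev, Matrix.transpose_nonsing_inv]
  have hWc : W = c • U⁻¹ := by
    open scoped MatrixOrder in
    apply (CFC.sq_eq_sq_iff W (c • U⁻¹) hW.posSemidef.nonneg hcUinv.posSemidef.nonneg).mp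
    rw [pow_two, pow_two, hW2]
    calc (c • (F⁻¹)ᵀ)ᵀ * (c • (F⁻¹)ᵀ)
        = (c * c) • (F⁻¹ * (F⁻¹)ᵀ) := by
          rw [Matrix.transpose_smul, Matrix.transpose_transpose, Matrix.smul_mul,
            Matrix.mul_smul, smul_smul]
      _ = (c * c) • (U⁻¹ * U⁻¹) := by rw [hUU]
      _ = (c • U⁻¹) * (c • U⁻¹) := by
          rw [Matrix.smul_mul, Matrix.mul_smul, smul_smul]
  obtain ⟨hYs, hYe⟩ := matLog_spec hU
  obtain ⟨hXs, hXe⟩ := matLog_spec hW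
  set Y := matLog U with hYdef
  set X := matLog W with hXdef
  -- trace of Y
  have htrY : Y.trace = a := by
    have h4 := det_mexp hYs
    rw [hYe, hdetU] at h4
    rw [ha, h4, Real.log_exp]
  -- the candidate log of W
  have hLs : (a • (1 : Matrix (Fin n) (Fin n) ℝ) - Y).IsSymm := by
    rw [Matrix.IsSymm, Matrix.transpose_sub, Matrix.transpose_smul, Matrix.transpose_one, hYs]
  have hL : mexp (a • (1 : Matrix (Fin n) (Fin n) ℝ) - Y) = c • U⁻¹ := by
    rw [sub_eq_add_neg, mexp, Matrix.exp_add_of_commute _ _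
      (((Commute.one_left (-Y)).smul_left a))]
    rw [show NormedSpace.exp = mexp from rfl, mexp_smul_one, mexp, Matrix.exp_neg,
      show NormedSpace.exp = mexp from rfl, hYe, Real.exp_log hFdet,
      Matrix.smul_mul, Matrix.one_mul]
  have hXL : X = a • (1 : Matrix (Fin n) (Fin n) ℝ) - Y := by
    apply mexp_inj hXs hLs
    rw [hXe, hWc, hL]
  have htrX : X.trace = a * n - a := by
    rw [hXL, Matrix.trace_sub, Matrix.trace_smul, Matrix.trace_one, htrY, smul_eq_mul]
    simp
  constructor
  · rcases Nat.eq_zero_or_pos n with hn | hn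
    · have hsub : Subsingleton (Matrix (Fin n) (Fin n) ℝ) := by
        subst hn
        infer_instance
      rw [Subsingleton.elim (devPart X) (devPart Y)]
    · have hn' : (n : ℝ) ≠ 0 := Nat.cast_ne_zero.mpr hn.ne'
      have hdev : devPart X = -devPart Y := by
        rw [devPart, devPart, hXL, Matrix.trace_sub, Matrix.trace_smul, Matrix.trace_one,
          htrY, smul_eq_mul]
        simp only [Fintype.card_fin]
        have hs2 : (a * n - a) / n = a - a / n := by field_simp
        rw [hs2]
        module
      rw [hdev, frobSq_neg]
  · rw [htrX, htrY]
    ring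
end

section
/- For a strictly monotone scale function e : (0,∞) → ℝ, the induced primary matrix function E on PSym(n), defined by applying e to the eigenvalues in a spectral decomposition, is strictly monotone: ⟨E(U₁) − E(U₂), U₁ − U₂⟩ > 0 for all U₁ ≠ U₂ in PSym(n); in particular, E is injective. -/
open Matrix
open scoped Classical

/-- Primary matrix function induced by the scale function `e` via spectral decomposition. -/
noncomputable def primaryMF {n : ℕ} (e : ℝ → ℝ) {U : Matrix (Fin n) (Fin n) ℝ}
    (hU : U.IsHermitian) : Matrix (Fin n) (Fin n) ℝ :=
  (hU.eigenvectorUnitary : Matrix (Fin n) (Fin n) ℝ) *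
    Matrix.diagonal (fun i => e (hU.eigenvalues i)) *
    star (hU.eigenvectorUnitary : Matrix (Fin n) (Fin n) ℝ)

namespace PMFaux

variable {n : ℕ}

lemma star_eq_transpose (V : Matrix (Fin n) (Fin n) ℝ) : star V = Vᵀ := by
  ext i j
  simp [Matrix.star_eq_conjTranspose, Matrix.conjTranspose_apply]

lemma trace_DWDW (d₁ d₂ : Fin n → ℝ) (W : Matrix (Fin n) (Fin n) ℝ) :
    (Matrix.diagonal d₁ * W * Matrix.diagonal d₂ * Wᵀ).trace
      = ∑ i, ∑ j, d₁ i * d₂ j * (W i j) ^ 2 := by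
  have h : ∀ i, (Matrix.diagonal d₁ * W * Matrix.diagonal d₂ * Wᵀ) i i
      = ∑ j, d₁ i * W i j * d₂ j * W i j := by
    intro i
    rw [Matrix.mul_apply]
    refine Finset.sum_congr rfl fun j _ => ?_
    rw [Matrix.mul_diagonal, Matrix.diagonal_mul, Matrix.transpose_apply]
  simp only [Matrix.trace, Matrix.diag_apply, h]
  exact Finset.sum_congr rfl fun i _ => Finset.sum_congr rfl fun j _ => by ring

lemma trace_conj_conj (V₁ V₂ : Matrix.unitaryGroup (Fin n) ℝ) (d₁ d₂ : Fin n → ℝ) :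
    (((V₁ : Matrix (Fin n) (Fin n) ℝ) * Matrix.diagonal d₁ * star (V₁ : Matrix (Fin n) (Fin n) ℝ)) *
      ((V₂ : Matrix (Fin n) (Fin n) ℝ) * Matrix.diagonal d₂ * star (V₂ : Matrix (Fin n) (Fin n) ℝ))).trace
    = ∑ i, ∑ j, d₁ i * d₂ j *
        ((star (V₁ : Matrix (Fin n) (Fin n) ℝ) * (V₂ : Matrix (Fin n) (Fin n) ℝ)) i j) ^ 2 := by
  set A := (V₁ : Matrix (Fin n) (Fin n) ℝ) with hA
  set B := (V₂ : Matrix (Fin n) (Fin n) ℝ) with hB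
  have hW : star B * A = (star A * B)ᵀ := by
    rw [← star_eq_transpose, StarMul.star_mul, star_star]
  have h1 : (A * Matrix.diagonal d₁ * star A) * (B * Matrix.diagonal d₂ * star B)
      = A * (Matrix.diagonal d₁ * (star A * B) * Matrix.diagonal d₂ * star B) := by
    noncomm_ring
  rw [h1, Matrix.trace_mul_comm]
  have h2 : Matrix.diagonal d₁ * (star A * B) * Matrix.diagonal d₂ * star B * A
      = Matrix.diagonal d₁ * (star A * B) * Matrix.diagonal d₂ * (star A * B)ᵀ := by
    rw [← hW]; noncomm_ring
  rw [h2, trace_DWDW]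

lemma conj_eq_iff (V₁ V₂ : Matrix.unitaryGroup (Fin n) ℝ) (d₁ d₂ : Fin n → ℝ) :
    (V₁ : Matrix (Fin n) (Fin n) ℝ) * Matrix.diagonal d₁ * star (V₁ : Matrix (Fin n) (Fin n) ℝ)
      = (V₂ : Matrix (Fin n) (Fin n) ℝ) * Matrix.diagonal d₂ * star (V₂ : Matrix (Fin n) (Fin n) ℝ)
    ↔ ∀ i j, d₁ i * ((star (V₁ : Matrix (Fin n) (Fin n) ℝ) * (V₂ : Matrix (Fin n) (Fin n) ℝ)) i j)
        = ((star (V₁ : Matrix (Fin n) (Fin n) ℝ) * (V₂ : Matrix (Fin n) (Fin n) ℝ)) i j) * d₂ j := by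
  set A := (V₁ : Matrix (Fin n) (Fin n) ℝ) with hA
  set B := (V₂ : Matrix (Fin n) (Fin n) ℝ) with hB
  have hA1 : star A * A = 1 := V₁.2.1
  have hA2 : A * star A = 1 := V₁.2.2
  have hB1 : star B * B = 1 := V₂.2.1
  have hB2 : B * star B = 1 := V₂.2.2
  have key : (A * Matrix.diagonal d₁ * star A = B * Matrix.diagonal d₂ * star B)
      ↔ Matrix.diagonal d₁ * (star A * B) = (star A * B) * Matrix.diagonal d₂ := by
    constructor
    · intro h
      have l1 : star A * (A * Matrix.diagonal d₁ * star A) * B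
          = Matrix.diagonal d₁ * (star A * B) := by
        calc star A * (A * Matrix.diagonal d₁ * star A) * B
            = (star A * A) * Matrix.diagonal d₁ * (star A * B) := by noncomm_ring
          _ = Matrix.diagonal d₁ * (star A * B) := by rw [hA1, one_mul]
      have l2 : star A * (B * Matrix.diagonal d₂ * star B) * B
          = (star A * B) * Matrix.diagonal d₂ := by
        calc star A * (B * Matrix.diagonal d₂ * star B) * B
            = (star A * B) * Matrix.diagonal d₂ * (star B * B) := by noncomm_ring
          _ = (star A * B) * Matrix.diagonal d₂ := by rw [hB1, mul_one]
      calc Matrix.diagonal d₁ * (star A * B)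
          = star A * (A * Matrix.diagonal d₁ * star A) * B := l1.symm
        _ = star A * (B * Matrix.diagonal d₂ * star B) * B := by rw [h]
        _ = (star A * B) * Matrix.diagonal d₂ := l2
    · intro h
      have r1 : A * (Matrix.diagonal d₁ * (star A * B)) * star B
          = A * Matrix.diagonal d₁ * star A := by
        calc A * (Matrix.diagonal d₁ * (star A * B)) * star B
            = A * Matrix.diagonal d₁ * star A * (B * star B) := by noncomm_ring
          _ = A * Matrix.diagonal d₁ * star A := by rw [hB2, mul_one]
      have r2 : A * ((star A * B) * Matrix.diagonal d₂) * star B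
          = B * Matrix.diagonal d₂ * star B := by
        calc A * ((star A * B) * Matrix.diagonal d₂) * star B
            = (A * star A) * (B * Matrix.diagonal d₂ * star B) := by noncomm_ring
          _ = B * Matrix.diagonal d₂ * star B := by rw [hA2, one_mul]
      rw [← r1, h, r2]
  rw [key]
  constructor
  · intro h i j
    have := congrFun (congrFun h i) j
    simpa [Matrix.diagonal_mul, Matrix.mul_diagonal] using this
  · intro h
    ext i j
    simpa [Matrix.diagonal_mul, Matrix.mul_diagonal] using h i j

lemma conj_sym (V : Matrix.unitaryGroup (Fin n) ℝ) (d : Fin n → ℝ) :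
    ((V : Matrix (Fin n) (Fin n) ℝ) * Matrix.diagonal d * star (V : Matrix (Fin n) (Fin n) ℝ))ᵀ
      = (V : Matrix (Fin n) (Fin n) ℝ) * Matrix.diagonal d * star (V : Matrix (Fin n) (Fin n) ℝ) := by
  have h : ((V : Matrix (Fin n) (Fin n) ℝ) * Matrix.diagonal d *
      star (V : Matrix (Fin n) (Fin n) ℝ)).IsHermitian := by
    rw [Matrix.star_eq_conjTranspose]
    exact Matrix.isHermitian_mul_mul_conjTranspose _ (Matrix.isHermitian_diagonal _)
  rw [← star_eq_transpose, Matrix.star_eq_conjTranspose]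
  exact h

end PMFaux

open PMFaux in
theorem primaryMF_strictMono {n : ℕ} (e : ℝ → ℝ) (he : StrictMonoOn e (Set.Ioi 0))
    {U₁ U₂ : Matrix (Fin n) (Fin n) ℝ} (h₁ : U₁.PosDef) (h₂ : U₂.PosDef) :
    (U₁ ≠ U₂ →
      0 < ((primaryMF e h₁.1 - primaryMF e h₂.1)ᵀ * (U₁ - U₂)).trace) ∧
    (primaryMF e h₁.1 = primaryMF e h₂.1 → U₁ = U₂) := by
  classical
  set V₁ := h₁.1.eigenvectorUnitary with hV₁
  set V₂ := h₂.1.eigenvectorUnitary with hV₂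
  set lam := h₁.1.eigenvalues with hlam
  set mu := h₂.1.eigenvalues with hmu
  set W : Matrix (Fin n) (Fin n) ℝ :=
    star (V₁ : Matrix (Fin n) (Fin n) ℝ) * (V₂ : Matrix (Fin n) (Fin n) ℝ) with hWdef
  have hlampos : ∀ i, lam i ∈ Set.Ioi (0:ℝ) := fun i => Set.mem_Ioi.mpr (h₁.eigenvalues_pos i)
  have hmupos : ∀ i, mu i ∈ Set.Ioi (0:ℝ) := fun i => Set.mem_Ioi.mpr (h₂.eigenvalues_pos i)
  have hU₁ : U₁ = (V₁ : Matrix (Fin n) (Fin n) ℝ) * Matrix.diagonal lam *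
      star (V₁ : Matrix (Fin n) (Fin n) ℝ) := by
    simpa [RCLike.ofReal_real_eq_id] using h₁.1.spectral_theorem
  have hU₂ : U₂ = (V₂ : Matrix (Fin n) (Fin n) ℝ) * Matrix.diagonal mu *
      star (V₂ : Matrix (Fin n) (Fin n) ℝ) := by
    simpa [RCLike.ofReal_real_eq_id] using h₂.1.spectral_theorem
  have hApmf : primaryMF e h₁.1 = (V₁ : Matrix (Fin n) (Fin n) ℝ) *
      Matrix.diagonal (fun i => e (lam i)) * star (V₁ : Matrix (Fin n) (Fin n) ℝ) := rfl
  have hBpmf : primaryMF e h₂.1 = (V₂ : Matrix (Fin n) (Fin n) ℝ) *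
      Matrix.diagonal (fun i => e (mu i)) * star (V₂ : Matrix (Fin n) (Fin n) ℝ) := rfl
  -- W transposed relation
  have hWT : star (V₂ : Matrix (Fin n) (Fin n) ℝ) * (V₁ : Matrix (Fin n) (Fin n) ℝ) = Wᵀ := by
    rw [hWdef, ← star_eq_transpose, StarMul.star_mul, star_star]
  -- row and column sums of W^2
  have hWWT : W * Wᵀ = 1 := by
    rw [← star_eq_transpose, hWdef, StarMul.star_mul, star_star]
    calc (star (V₁ : Matrix (Fin n) (Fin n) ℝ) * (V₂ : Matrix (Fin n) (Fin n) ℝ)) *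
          (star (V₂ : Matrix (Fin n) (Fin n) ℝ) * (V₁ : Matrix (Fin n) (Fin n) ℝ))
        = star (V₁ : Matrix (Fin n) (Fin n) ℝ) *
            ((V₂ : Matrix (Fin n) (Fin n) ℝ) * star (V₂ : Matrix (Fin n) (Fin n) ℝ)) *
            (V₁ : Matrix (Fin n) (Fin n) ℝ) := by noncomm_ring
      _ = 1 := by rw [V₂.2.2, mul_one, V₁.2.1]
  have hWTW : Wᵀ * W = 1 := by
    rw [← star_eq_transpose, hWdef, StarMul.star_mul, star_star]
    calc (star (V₂ : Matrix (Fin n) (Fin n) ℝ) * (V₁ : Matrix (Fin n) (Fin n) ℝ)) *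
          (star (V₁ : Matrix (Fin n) (Fin n) ℝ) * (V₂ : Matrix (Fin n) (Fin n) ℝ))
        = star (V₂ : Matrix (Fin n) (Fin n) ℝ) *
            ((V₁ : Matrix (Fin n) (Fin n) ℝ) * star (V₁ : Matrix (Fin n) (Fin n) ℝ)) *
            (V₂ : Matrix (Fin n) (Fin n) ℝ) := by noncomm_ring
      _ = 1 := by rw [V₁.2.2, mul_one, V₂.2.1]
  have hWrow : ∀ i, ∑ j, (W i j) ^ 2 = 1 := by
    intro i
    have h := congrFun (congrFun hWWT i) i
    simpa [Matrix.mul_apply, Matrix.transpose_apply, Matrix.one_apply_eq, pow_two] using h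
  have hWcol : ∀ j, ∑ i, (W i j) ^ 2 = 1 := by
    intro j
    have h := congrFun (congrFun hWTW j) j
    simpa [Matrix.mul_apply, Matrix.transpose_apply, Matrix.one_apply_eq, pow_two] using h
  -- trace pieces
  have t11 : ((primaryMF e h₁.1) * U₁).trace = ∑ i, e (lam i) * lam i := by
    rw [hApmf, hU₁, trace_conj_conj]
    rw [show star (V₁ : Matrix (Fin n) (Fin n) ℝ) * (V₁ : Matrix (Fin n) (Fin n) ℝ) = 1 from V₁.2.1]
    refine Finset.sum_congr rfl fun i _ => ?_
    rw [Finset.sum_eq_single i]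
    · rw [Matrix.one_apply_eq]; ring
    · intro j _ hj
      rw [Matrix.one_apply_ne (Ne.symm hj)]; ring
    · intro h; exact absurd (Finset.mem_univ i) h
  have t22 : ((primaryMF e h₂.1) * U₂).trace = ∑ i, e (mu i) * mu i := by
    rw [hBpmf, hU₂, trace_conj_conj]
    rw [show star (V₂ : Matrix (Fin n) (Fin n) ℝ) * (V₂ : Matrix (Fin n) (Fin n) ℝ) = 1 from V₂.2.1]
    refine Finset.sum_congr rfl fun i _ => ?_
    rw [Finset.sum_eq_single i]
    · rw [Matrix.one_apply_eq]; ring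
    · intro j _ hj
      rw [Matrix.one_apply_ne (Ne.symm hj)]; ring
    · intro h; exact absurd (Finset.mem_univ i) h
  have t12 : ((primaryMF e h₁.1) * U₂).trace = ∑ i, ∑ j, e (lam i) * mu j * (W i j) ^ 2 := by
    rw [hApmf, hU₂, trace_conj_conj, ← hWdef]
  have t21 : ((primaryMF e h₂.1) * U₁).trace = ∑ i, ∑ j, e (mu i) * lam j * (W j i) ^ 2 := by
    rw [hBpmf, hU₁, trace_conj_conj, hWT]
    refine Finset.sum_congr rfl fun i _ => Finset.sum_congr rfl fun j _ => ?_
    rw [Matrix.transpose_apply]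
  -- sum identities
  have q1 : ∑ i, ∑ j, e (lam i) * lam i * (W i j) ^ 2 = ∑ i, e (lam i) * lam i := by
    refine Finset.sum_congr rfl fun i _ => ?_
    rw [← Finset.mul_sum, hWrow i, mul_one]
  have q4 : ∑ i, ∑ j, e (mu j) * mu j * (W i j) ^ 2 = ∑ j, e (mu j) * mu j := by
    rw [Finset.sum_comm]
    refine Finset.sum_congr rfl fun j _ => ?_
    rw [← Finset.mul_sum, hWcol j, mul_one]
  have q3 : ∑ i, ∑ j, e (mu i) * lam j * (W j i) ^ 2
      = ∑ i, ∑ j, e (mu j) * lam i * (W i j) ^ 2 := Finset.sum_comm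
  -- the main trace formula
  have hsum : ((primaryMF e h₁.1 - primaryMF e h₂.1)ᵀ * (U₁ - U₂)).trace
      = ∑ i, ∑ j, (W i j) ^ 2 * ((e (lam i) - e (mu j)) * (lam i - mu j)) := by
    have htrans : (primaryMF e h₁.1 - primaryMF e h₂.1)ᵀ
        = primaryMF e h₁.1 - primaryMF e h₂.1 := by
      rw [Matrix.transpose_sub, hApmf, hBpmf, conj_sym, conj_sym]
    have hexp : ∑ i, ∑ j, (W i j) ^ 2 * ((e (lam i) - e (mu j)) * (lam i - mu j))
        = ((∑ i, ∑ j, e (lam i) * lam i * (W i j) ^ 2)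
            - (∑ i, ∑ j, e (lam i) * mu j * (W i j) ^ 2))
          - ((∑ i, ∑ j, e (mu j) * lam i * (W i j) ^ 2)
            - (∑ i, ∑ j, e (mu j) * mu j * (W i j) ^ 2)) := by
      rw [← Finset.sum_sub_distrib, ← Finset.sum_sub_distrib, ← Finset.sum_sub_distrib]
      refine Finset.sum_congr rfl fun i _ => ?_
      rw [← Finset.sum_sub_distrib, ← Finset.sum_sub_distrib, ← Finset.sum_sub_distrib]
      exact Finset.sum_congr rfl fun j _ => by ring
    rw [htrans, Matrix.sub_mul, Matrix.mul_sub, Matrix.mul_sub, Matrix.trace_sub,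
      Matrix.trace_sub, Matrix.trace_sub, t11, t12, t21, t22, hexp, q1, q4, q3]
  -- termwise nonnegativity
  have hterm : ∀ i j, 0 ≤ (W i j) ^ 2 * ((e (lam i) - e (mu j)) * (lam i - mu j)) := by
    intro i j
    apply mul_nonneg (sq_nonneg _)
    rcases lt_trichotomy (lam i) (mu j) with h | h | h
    · have := he (hlampos i) (hmupos j) h
      nlinarith
    · rw [h]; simp
    · have := he (hmupos j) (hlampos i) h
      nlinarith
  have hprodpos : ∀ i j, lam i ≠ mu j →
      0 < (e (lam i) - e (mu j)) * (lam i - mu j) := by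
    intro i j hne
    rcases lt_or_gt_of_ne hne with h | h
    · have := he (hlampos i) (hmupos j) h
      nlinarith
    · have := he (hmupos j) (hlampos i) h
      nlinarith
  -- zero case forces equality
  have hzero : (∀ i j, (W i j) ^ 2 * ((e (lam i) - e (mu j)) * (lam i - mu j)) = 0)
      → U₁ = U₂ := by
    intro h0
    have hcomm : ∀ i j, lam i * W i j = W i j * mu j := by
      intro i j
      by_cases hw : W i j = 0
      · simp [hw]
      · have heq : lam i = mu j := by
          by_contra hne
          have hp := hprodpos i j hne
          have hw2 : 0 < (W i j) ^ 2 := by positivity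
          nlinarith [h0 i j]
        rw [heq, mul_comm]
    rw [hU₁, hU₂]
    exact (conj_eq_iff V₁ V₂ lam mu).mpr hcomm
  constructor
  · intro hne
    rw [hsum]
    have hge : 0 ≤ ∑ i, ∑ j, (W i j) ^ 2 * ((e (lam i) - e (mu j)) * (lam i - mu j)) :=
      Finset.sum_nonneg fun i _ => Finset.sum_nonneg fun j _ => hterm i j
    rcases hge.lt_or_eq with h | h
    · exact h
    · exfalso
      apply hne
      apply hzero
      intro i j
      have hinner : ∀ i ∈ Finset.univ,
          (0:ℝ) ≤ ∑ j, (W i j) ^ 2 * ((e (lam i) - e (mu j)) * (lam i - mu j)) :=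
        fun i _ => Finset.sum_nonneg fun j _ => hterm i j
      have h1 := (Finset.sum_eq_zero_iff_of_nonneg hinner).mp h.symm i (Finset.mem_univ i)
      exact (Finset.sum_eq_zero_iff_of_nonneg (fun j _ => hterm i j)).mp h1 j (Finset.mem_univ j)
  · intro hEq
    rw [hApmf, hBpmf] at hEq
    have hW1 := (conj_eq_iff V₁ V₂ (fun i => e (lam i)) (fun i => e (mu i))).mp hEq
    have hcomm : ∀ i j, lam i * W i j = W i j * mu j := by
      intro i j
      by_cases hw : W i j = 0
      · simp [hw]
      · have he' := hW1 i j
        rw [← hWdef] at he'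
        have heq : e (lam i) = e (mu j) := by
          have h' : e (lam i) * W i j = e (mu j) * W i j := by
            rw [he', mul_comm]
          exact mul_right_cancel₀ hw h'
        have : lam i = mu j := he.injOn (hlampos i) (hmupos j) heq
        rw [this, mul_comm]
    rw [hU₁, hU₂]
    exact (conj_eq_iff V₁ V₂ lam mu).mpr hcomm
end
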